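/- Define q^{(1,n)}_{-n+j} as the coefficient of x^{-n+j} in the Laurent expansion of e^x/(e^x-1)^n. Then for every n \in \mathbb{Z} and j > 0: q^{(1,n)}_{-n+j} = -(1/j)[ (B_j/j!)(n-j-1) + \sum_{i=1}^{j-1} i \, q^{(1,n+i-j)}_{-n+j} \, q^{(1,-n-i+j+2)}_{n-2} ], where B_j is the j-th Bernoulli number with the convention B_1 = 1/2 (i.e., B_j/j! is the coefficient of x^{j-1} in e^x/(e^x-1)). -/

import Mathlib

/-- `E = e^x` as a formal Laurent series over `ℚ`. -/
noncomputable def E : LaurentSeries ℚ := HahnSeries.ofPowerSeries ℤ ℚ (PowerSeries.exp ℚ)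

/-- `q n k` is the coefficient of `x^k` in the Laurent expansion of `e^x/(e^x-1)^n`. -/
noncomputable def q (n k : ℤ) : ℚ := (E * ((E - 1) ^ n)⁻¹).coeff k

open PowerSeries Finset

noncomputable section

namespace Stmt19Aux

abbrev PS := PowerSeries ℚ
abbrev L := LaurentSeries ℚ

def Ex : PS := PowerSeries.exp ℚ
def Pex : PS := Ex - 1
def u : PS := PowerSeries.mk fun n => 1 / ((n + 1).factorial : ℚ)
def w : PS := PowerSeries.mk fun n => (-1) ^ n / (n + 1)
def vinv : PS := PowerSeries.mk fun n => (-1) ^ n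
def Qlog : PS := PowerSeries.X * w

lemma coeff_Ex (n : ℕ) : coeff n Ex = 1 / (n.factorial : ℚ) := by
  simp [Ex, PowerSeries.coeff_exp, Algebra.algebraMap_self]

lemma constantCoeff_Ex : constantCoeff Ex = 1 := by
  rw [← coeff_zero_eq_constantCoeff, coeff_Ex]; simp

lemma X_mul_u : PowerSeries.X * u = Pex := by
  ext n
  cases n with
  | zero => simp [Pex, constantCoeff_Ex, coeff_zero_eq_constantCoeff, map_sub]
  | succ n =>
      rw [coeff_succ_X_mul]
      simp [Pex, u, coeff_Ex, coeff_one, Nat.succ_ne_zero]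

lemma derivative_Ex : d⁄dX ℚ Ex = Ex := by
  ext n
  rw [coeff_derivative, coeff_Ex, coeff_Ex]
  have h1 : (((n+1).factorial) : ℚ) = (n+1) * (n.factorial : ℚ) := by
    rw [Nat.factorial_succ]; push_cast; ring
  have h2 : ((n:ℚ)+1) ≠ 0 := by positivity
  have h3 : ((n.factorial : ℚ)) ≠ 0 := by exact_mod_cast Nat.factorial_ne_zero n
  field_simp [h1]
  exact h1.symm

lemma derivative_Qlog : d⁄dX ℚ Qlog = vinv := by
  ext n
  rw [coeff_derivative]
  simp only [Qlog, coeff_succ_X_mul, w, coeff_mk, vinv]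
  have h2 : ((n:ℚ)+1) ≠ 0 := by positivity
  field_simp

lemma onePlusX_mul_vinv : (1 + PowerSeries.X) * vinv = 1 := by
  ext n
  rw [add_mul, one_mul, map_add]
  cases n with
  | zero => simp [vinv, coeff_one]
  | succ n =>
      rw [coeff_succ_X_mul]
      simp [vinv, coeff_one, Nat.succ_ne_zero, pow_succ]

lemma X_mul_derivative_w : PowerSeries.X * d⁄dX ℚ w = vinv - w := by
  ext n
  cases n with
  | zero => simp [vinv, w, coeff_zero_eq_constantCoeff, map_sub]
  | succ n =>
      rw [coeff_succ_X_mul, coeff_derivative, map_sub]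
      simp only [w, vinv, coeff_mk]
      have h2 : ((n:ℚ)+2) ≠ 0 := by positivity
      field_simp
      push_cast; ring

lemma constantCoeff_u : constantCoeff u = 1 := by
  rw [← coeff_zero_eq_constantCoeff]; simp [u]

lemma constantCoeff_w : constantCoeff w = 1 := by
  rw [← coeff_zero_eq_constantCoeff]; simp [w]

lemma isUnit_u : IsUnit u := by
  rw [PowerSeries.isUnit_iff_constantCoeff, constantCoeff_u]; exact isUnit_one

lemma isUnit_w : IsUnit w := by
  rw [PowerSeries.isUnit_iff_constantCoeff, constantCoeff_w]; exact isUnit_one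

lemma isUnit_onePlusX : IsUnit (1 + PowerSeries.X : PS) := by
  rw [PowerSeries.isUnit_iff_constantCoeff]; simp

def Uu : PSˣ := isUnit_u.unit
def Wu : PSˣ := isUnit_w.unit
def Vu : PSˣ := isUnit_onePlusX.unit

lemma Uu_val : (Uu : PS) = u := isUnit_u.unit_spec
lemma Wu_val : (Wu : PS) = w := isUnit_w.unit_spec
lemma Vu_val : (Vu : PS) = 1 + PowerSeries.X := isUnit_onePlusX.unit_spec

lemma val_zpow_mul (V : PSˣ) (a b : ℤ) :
    ((V ^ a : PSˣ) : PS) * ((V ^ b : PSˣ) : PS) = ((V ^ (a + b) : PSˣ) : PS) := by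
  rw [← Units.val_mul, ← zpow_add]

lemma constantCoeff_unit_zpow (V : PSˣ) (h : constantCoeff (V : PS) = 1) (k : ℤ) :
    constantCoeff ((V ^ k : PSˣ) : PS) = 1 := by
  have hnat : ∀ n : ℕ, constantCoeff ((V ^ (n : ℤ) : PSˣ) : PS) = 1 := by
    intro n
    rw [zpow_natCast, Units.val_pow_eq_pow_val, map_pow, h, one_pow]
  cases k with
  | ofNat n => exact hnat n
  | negSucc m =>
      have hmul : ((V ^ (Int.negSucc m) : PSˣ) : PS) * ((V ^ ((m + 1 : ℕ) : ℤ) : PSˣ) : PS) = 1 := by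
        rw [val_zpow_mul]
        have h0 : Int.negSucc m + ((m + 1 : ℕ) : ℤ) = 0 := by
          rw [Int.negSucc_eq]; push_cast; ring
        rw [h0, zpow_zero, Units.val_one]
      have h1 := congrArg (constantCoeff) hmul
      rw [map_mul, hnat (m + 1), mul_one, map_one] at h1
      exact h1

/-- derivative of integer powers of a unit -/
lemma derivative_unit_zpow (V : PSˣ) (k : ℤ) :
    d⁄dX ℚ ((V ^ k : PSˣ) : PS) = k • (((V ^ (k - 1) : PSˣ) : PS) * d⁄dX ℚ (V : PS)) := by
  have hpow : ∀ n : ℕ, d⁄dX ℚ ((V ^ (n : ℤ) : PSˣ) : PS)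
      = (n : ℤ) • (((V ^ ((n : ℤ) - 1) : PSˣ) : PS) * d⁄dX ℚ (V : PS)) := by
    intro n
    cases n with
    | zero => simp
    | succ m =>
        have h1 : ((V ^ ((m + 1 : ℕ) : ℤ) : PSˣ) : PS) = ((V : PS)) ^ (m + 1) := by
          rw [zpow_natCast, Units.val_pow_eq_pow_val]
        have h2 : ((V ^ (((m + 1 : ℕ) : ℤ) - 1) : PSˣ) : PS) = ((V : PS)) ^ m := by
          push_cast
          rw [add_sub_cancel_right, zpow_natCast, Units.val_pow_eq_pow_val]
        rw [h1, h2, Derivation.leibniz_pow]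
        rw [smul_eq_mul, nsmul_eq_mul, zsmul_eq_mul]
        push_cast
        ring
  cases k with
  | ofNat n => exact hpow n
  | negSucc m =>
      have hmul : ((V ^ (Int.negSucc m) : PSˣ) : PS) * ((V ^ ((m + 1 : ℕ) : ℤ) : PSˣ) : PS) = 1 := by
        rw [val_zpow_mul]
        have h0 : Int.negSucc m + ((m + 1 : ℕ) : ℤ) = 0 := by
          rw [Int.negSucc_eq]; push_cast; ring
        rw [h0, zpow_zero, Units.val_one]
      have := (d⁄dX ℚ).leibniz_of_mul_eq_one hmul
      rw [this, hpow (m + 1)]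
      have hsq : ((V ^ (Int.negSucc m) : PSˣ) : PS) ^ 2 = ((V ^ (2 * Int.negSucc m) : PSˣ) : PS) := by
        rw [← Units.val_pow_eq_pow_val, ← zpow_natCast (V ^ (Int.negSucc m)), ← zpow_mul]
        norm_num [mul_comm]
      have hcomb : ((V ^ (2 * Int.negSucc m) : PSˣ) : PS) * ((V ^ ((m:ℕ) : ℤ) : PSˣ) : PS)
          = ((V ^ (Int.negSucc m - 1) : PSˣ) : PS) := by
        rw [val_zpow_mul]
        congr 1
        rw [Int.negSucc_eq]; push_cast; ring
      have hm : (((m + 1 : ℕ) : ℤ) - 1) = ((m:ℕ) : ℤ) := by push_cast; ring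
      rw [hm, zsmul_eq_mul, zsmul_eq_mul, hsq, ← hcomb]
      push_cast [Int.negSucc_eq]
      rw [smul_eq_mul]
      ring

lemma constantCoeff_Pex : constantCoeff Pex = 0 := by
  rw [Pex, map_sub, constantCoeff_Ex, map_one, sub_self]

lemma coeff_Pex_pow_zero {n d : ℕ} (h : n < d) : coeff n (Pex ^ d) = 0 := by
  have hdvd : (PowerSeries.X : PS) ^ d ∣ Pex ^ d := by
    apply pow_dvd_pow_of_dvd
    rw [PowerSeries.X_dvd_iff]
    exact constantCoeff_Pex
  exact (PowerSeries.X_pow_dvd_iff.mp hdvd) n h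

/-- substitution of `Pex` into a power series -/
def sub (g : PS) : PS :=
  PowerSeries.mk fun n => ∑ d ∈ range (n + 1), coeff d g * coeff n (Pex ^ d)

lemma coeff_sub (g : PS) (n : ℕ) :
    coeff n (sub g) = ∑ d ∈ range (n + 1), coeff d g * coeff n (Pex ^ d) :=
  coeff_mk _ _

lemma coeff_sub' (g : PS) {n m : ℕ} (h : n < m) :
    coeff n (sub g) = ∑ d ∈ range m, coeff d g * coeff n (Pex ^ d) := by
  rw [coeff_sub]
  apply Finset.sum_subset (range_subset_range.mpr h)
  intro d hd hnd
  rw [mem_range] at hd hnd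
  rw [coeff_Pex_pow_zero (by omega), mul_zero]

lemma coeff_aeval (p : Polynomial ℚ) (n : ℕ) :
    coeff n (Polynomial.aeval Pex p) = ∑ d ∈ range (n + 1), p.coeff d * coeff n (Pex ^ d) := by
  classical
  have hdeg : p.natDegree < max (p.natDegree + 1) (n + 1) := by omega
  rw [Polynomial.aeval_eq_sum_range' hdeg, map_sum]
  have hc : ∀ d ∈ range (max (p.natDegree + 1) (n + 1)),
      (coeff n) (p.coeff d • Pex ^ d) = p.coeff d * coeff n (Pex ^ d) := by
    intro d _
    rw [LinearMap.map_smul, smul_eq_mul]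
  rw [Finset.sum_congr rfl hc]
  symm
  apply Finset.sum_subset (range_subset_range.mpr (le_max_right _ _))
  intro d hd hnd
  rw [mem_range] at hd hnd
  rw [coeff_Pex_pow_zero (by omega), mul_zero]

lemma sub_stab (g : PS) {n m : ℕ} (h : n < m) :
    coeff n (sub g) = coeff n (Polynomial.aeval Pex (trunc m g)) := by
  rw [coeff_aeval, coeff_sub]
  apply Finset.sum_congr rfl
  intro d hd
  rw [mem_range] at hd
  rw [coeff_trunc]
  rw [if_pos (by omega)]

lemma sub_add (f g : PS) : sub (f + g) = sub f + sub g := by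
  ext n
  rw [map_add, coeff_sub, coeff_sub, coeff_sub, ← Finset.sum_add_distrib]
  apply Finset.sum_congr rfl
  intro d _
  rw [map_add, add_mul]

lemma sub_one : sub 1 = 1 := by
  ext n
  rw [coeff_sub]
  rw [Finset.sum_eq_single 0]
  · simp
  · intro d _ hd
    rw [PowerSeries.coeff_one, if_neg hd, zero_mul]
  · simp

lemma sub_mul (f g : PS) : sub (f * g) = sub f * sub g := by
  ext n
  have key : coeff n (sub f * sub g) =
      coeff n ((Polynomial.aeval Pex (trunc (n+1) f)) * (Polynomial.aeval Pex (trunc (n+1) g))) := by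
    rw [PowerSeries.coeff_mul, PowerSeries.coeff_mul]
    apply Finset.sum_congr rfl
    intro p hp
    rw [Finset.HasAntidiagonal.mem_antidiagonal] at hp
    rw [sub_stab f (show p.1 < n+1 by omega), sub_stab g (show p.2 < n+1 by omega)]
  rw [key, ← map_mul]
  rw [sub_stab (f * g) (Nat.lt_succ_self n), coeff_aeval, coeff_aeval]
  apply Finset.sum_congr rfl
  intro d hd
  rw [mem_range] at hd
  congr 1
  -- (trunc (n+1) f * trunc (n+1) g).coeff d = (trunc (n+1) (f*g)).coeff d for d ≤ n
  have h1 : (Polynomial.coeff (trunc (n+1) f * trunc (n+1) g) d)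
      = coeff d ((trunc (n+1) f : PS) * (trunc (n+1) g : PS)) := by
    rw [← Polynomial.coe_mul, Polynomial.coeff_coe]
  have h2 := PowerSeries.trunc_trunc_mul_trunc (n := n+1) f g
  have h3 : coeff d ((trunc (n+1) f : PS) * (trunc (n+1) g : PS))
      = coeff d (f * g) := by
    have := congrArg (fun p => Polynomial.coeff p d) h2
    simp only [coeff_trunc, if_pos (show d < n+1 by omega)] at this
    exact this
  rw [h1, h3, coeff_trunc, if_pos (show d < n+1 by omega)]

lemma sub_X : sub PowerSeries.X = Pex := by
  ext n
  rw [coeff_sub]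
  cases n with
  | zero =>
      simp only [range_one, sum_singleton, pow_zero, coeff_zero_eq_constantCoeff]
      simp [constantCoeff_Pex]
  | succ m =>
      rw [Finset.sum_eq_single 1]
      · simp
      · intro d _ hd
        rw [PowerSeries.coeff_X, if_neg hd, zero_mul]
      · intro h
        exfalso
        rw [mem_range] at h
        omega

lemma constantCoeff_sub (g : PS) : constantCoeff (sub g) = constantCoeff g := by
  rw [← coeff_zero_eq_constantCoeff, coeff_sub]
  simp [coeff_zero_eq_constantCoeff]

lemma derivative_Pex : d⁄dX ℚ Pex = Ex := by
  unfold Pex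
  rw [map_sub, derivative_Ex, Derivation.map_one_eq_zero, sub_zero]

/-- the chain rule for `sub` -/
lemma derivative_sub_eq (g : PS) :
    d⁄dX ℚ (sub g) = sub (d⁄dX ℚ g) * Ex := by
  ext n
  rw [coeff_derivative, PowerSeries.coeff_mul]
  -- RHS: ∑ over antidiagonal
  have step1 : ∀ p ∈ antidiagonal n,
      coeff p.1 (sub (d⁄dX ℚ g)) * coeff p.2 Ex
        = ∑ d ∈ range (n + 1), (coeff d (d⁄dX ℚ g) * coeff p.1 (Pex ^ d)) * coeff p.2 Ex := by
    intro p hp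
    rw [Finset.HasAntidiagonal.mem_antidiagonal] at hp
    rw [coeff_sub' (d⁄dX ℚ g) (show p.1 < n + 1 by omega), Finset.sum_mul]
  rw [Finset.sum_congr rfl step1, Finset.sum_comm]
  have step2 : ∀ d ∈ range (n + 1),
      (∑ p ∈ antidiagonal n, coeff d (d⁄dX ℚ g) * coeff p.1 (Pex ^ d) * coeff p.2 Ex)
        = coeff (d + 1) g * (coeff (n+1) (Pex ^ (d+1)) * ((n:ℚ)+1)) := by
    intro d _
    have hmul : (∑ p ∈ antidiagonal n, coeff d (d⁄dX ℚ g) * coeff p.1 (Pex ^ d) * coeff p.2 Ex)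
        = coeff d (d⁄dX ℚ g) * coeff n (Pex ^ d * Ex) := by
      rw [PowerSeries.coeff_mul, Finset.mul_sum]
      apply Finset.sum_congr rfl
      intro p _
      ring
    rw [hmul, coeff_derivative]
    -- (d+1) • Pex^d • Ex = derivative (Pex^(d+1))
    have hleib : d⁄dX ℚ (Pex ^ (d+1)) = (d+1) • (Pex ^ d * Ex) := by
      rw [Derivation.leibniz_pow, Nat.add_sub_cancel, derivative_Pex, smul_eq_mul]
    have e1 : coeff (n+1) (Pex ^ (d+1)) * ((n:ℚ)+1) = ((d:ℚ)+1) * coeff n (Pex ^ d * Ex) := by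
      have h := congrArg (coeff n) hleib
      rw [coeff_derivative] at h
      rw [h, map_nsmul, nsmul_eq_mul]
      push_cast
      ring
    calc (coeff (d+1)) g * ((d:ℚ) + 1) * (coeff n) (Pex ^ d * Ex)
        = (coeff (d+1)) g * (((d:ℚ) + 1) * (coeff n) (Pex ^ d * Ex)) := by ring
      _ = (coeff (d+1)) g * ((coeff (n+1)) (Pex ^ (d+1)) * ((n:ℚ) + 1)) := by rw [← e1]
  rw [Finset.sum_congr rfl step2]
  -- now: ∑_{d ∈ range (n+1)} g_{d+1} * (coeff_{n+1}(P^{d+1}) * (n+1)) = coeff (n+1) (sub g) * (n+1)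
  rw [coeff_sub]
  rw [Finset.sum_range_succ' (fun e => coeff e g * coeff (n+1) (Pex ^ e)) (n+1)]
  have h0 : coeff 0 g * coeff (n+1) (Pex ^ 0) = 0 := by
    rw [pow_zero, PowerSeries.coeff_one, if_neg (Nat.succ_ne_zero n)]
    ring
  rw [h0, add_zero, Finset.sum_mul]
  apply Finset.sum_congr rfl
  intro d _
  ring

lemma sub_onePlusX : sub (1 + PowerSeries.X) = Ex := by
  rw [sub_add, sub_one, sub_X, Pex]
  ring

lemma Ex_mul_sub_vinv : Ex * sub vinv = 1 := by
  rw [← sub_onePlusX, ← sub_mul, onePlusX_mul_vinv, sub_one]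

lemma sub_Qlog : sub Qlog = PowerSeries.X := by
  apply PowerSeries.derivative.ext
  · rw [derivative_sub_eq, derivative_Qlog, derivative_X]
    rw [mul_comm, Ex_mul_sub_vinv]
  · rw [constantCoeff_sub]
    simp [Qlog]

lemma u_mul_sub_w : u * sub w = 1 := by
  have h : PowerSeries.X * (u * sub w) = PowerSeries.X * 1 := by
    rw [mul_one, ← mul_assoc, X_mul_u, ← sub_Qlog, Qlog, sub_mul, sub_X]
  exact mul_left_cancel₀ PowerSeries.X_ne_zero h

def EL : L := HahnSeries.ofPowerSeries ℤ ℚ (PowerSeries.exp ℚ)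

def oc : PS →+* L := HahnSeries.ofPowerSeries ℤ ℚ

def sz (m : ℤ) : L := HahnSeries.single m 1

def res (F : L) : ℚ := F.coeff (-1)

lemma res_add (F G : L) : res (F + G) = res F + res G := by
  simp [res]

lemma res_smul (a : ℚ) (F : L) : res (a • F) = a * res F := by
  simp [res]

lemma sz_mul (a b : ℤ) : sz a * sz b = sz (a + b) := by
  rw [sz, sz, sz, HahnSeries.single_mul_single, one_mul]

lemma sz_zero : sz 0 = 1 := rfl

lemma coeff_sz_mul (a : ℤ) (F : L) (b : ℤ) : (sz a * F).coeff b = F.coeff (b - a) := by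
  have h2 := HahnSeries.coeff_single_mul_add (r := (1:ℚ)) (x := F) (b := a) (a := b - a)
  have h3 : b - a + a = b := by ring
  rw [h3] at h2
  rw [sz, h2, one_mul]

lemma res_sz_mul (a : ℤ) (F : L) : res (sz a * F) = F.coeff (-1 - a) := coeff_sz_mul a F (-1)

lemma oc_coeff_nat (g : PS) (i : ℕ) : (oc g).coeff (i : ℤ) = coeff i g := by
  exact HahnSeries.ofPowerSeries_apply_coeff g i

lemma oc_coeff_neg (g : PS) {i : ℤ} (h : i < 0) : (oc g).coeff i = 0 := by
  have h2 := PowerSeries.coeff_coe g i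
  rw [if_pos h] at h2
  exact h2

lemma res_oc (g : PS) : res (oc g) = 0 := oc_coeff_neg g (by norm_num)

lemma oc_X : oc PowerSeries.X = sz 1 := HahnSeries.ofPowerSeries_X

lemma EL_eq : EL = oc Ex := rfl

lemma EL_sub_one : EL - 1 = oc Pex := by
  rw [Pex, map_sub, map_one, EL_eq]

lemma EL_sub_one_factor : EL - 1 = sz 1 * oc u := by
  rw [EL_sub_one, ← X_mul_u, map_mul, oc_X]

lemma sz_ne_zero (m : ℤ) : sz m ≠ 0 := HahnSeries.single_ne_zero one_ne_zero

lemma oc_ne_zero {g : PS} (h : g ≠ 0) : oc g ≠ 0 := by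
  intro hc
  exact h (HahnSeries.ofPowerSeries_injective (hc.trans (map_zero oc).symm))

lemma u_ne_zero : u ≠ 0 := by
  intro h
  have := constantCoeff_u
  rw [h, map_zero] at this
  norm_num at this

lemma ocu_ne_zero : oc u ≠ 0 := oc_ne_zero u_ne_zero

lemma EL_sub_one_ne_zero : (EL - 1 : L) ≠ 0 := by
  rw [EL_sub_one_factor]
  exact mul_ne_zero (sz_ne_zero 1) ocu_ne_zero

lemma szpow_nat (n : ℕ) : (sz 1) ^ n = sz n := by
  induction n with
  | zero => rw [pow_zero]; rfl
  | succ m ih => rw [pow_succ, ih, sz_mul]; norm_num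

lemma szpow (m : ℤ) : (sz 1) ^ m = sz m := by
  cases m with
  | ofNat n => rw [Int.ofNat_eq_coe, zpow_natCast, szpow_nat]
  | negSucc k =>
      rw [zpow_negSucc, szpow_nat]
      symm
      apply eq_inv_of_mul_eq_one_left
      rw [sz_mul, show ((Int.negSucc k) + ((k+1:ℕ):ℤ)) = 0 by rw [Int.negSucc_eq]; push_cast; ring]
      exact sz_zero

lemma oc_unit_zpow (V : PSˣ) (k : ℤ) : oc ((V ^ k : PSˣ) : PS) = (oc (V : PS)) ^ k := by
  have hV : oc (V : PS) ≠ 0 := oc_ne_zero (Units.ne_zero V)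
  cases k with
  | ofNat n =>
      rw [Int.ofNat_eq_coe, zpow_natCast, zpow_natCast, Units.val_pow_eq_pow_val, map_pow]
  | negSucc m =>
      rw [zpow_negSucc, zpow_negSucc]
      apply eq_inv_of_mul_eq_one_left
      rw [show (oc (V:PS))^(m+1) = oc (((V^(m+1) : PSˣ) : PS)) by
        rw [Units.val_pow_eq_pow_val, map_pow]]
      rw [← map_mul, Units.inv_mul, map_one]

lemma zpow_combine {x : L} (h : x ≠ 0) (a b : ℤ) : x ^ a * x ^ b = x ^ (a + b) :=
  (zpow_add₀ h a b).symm

lemma sz_eq_factor (m : ℤ) : sz m = (EL - 1) ^ m * (oc u) ^ (-m) := by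
  have h1 : sz 1 = (EL - 1) * (oc u)⁻¹ := by
    rw [EL_sub_one_factor, mul_assoc, mul_inv_cancel₀ ocu_ne_zero, mul_one]
  rw [← szpow, h1, mul_zpow, inv_zpow, ← zpow_neg]

lemma coeff_a_Ex (t : ℕ) : coeff (t+1) (((Uu ^ (-((t+2:ℕ):ℤ)) : PSˣ) : PS) * Ex) = 0 := by
  set a : PS := ((Uu ^ (-((t+2:ℕ):ℤ)) : PSˣ) : PS) with ha
  set c : PS := ((Uu ^ (-((t+1:ℕ):ℤ)) : PSˣ) : PS) with hc
  have hEx : Ex = u + PowerSeries.X * d⁄dX ℚ u := by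
    have h1 := derivative_Pex
    rw [← X_mul_u, Derivation.leibniz, derivative_X, smul_eq_mul, smul_eq_mul, mul_one] at h1
    rw [← h1]; ring
  have hau : a * u = c := by
    calc a * u = ((Uu ^ (-((t+2:ℕ):ℤ)) : PSˣ) : PS) * ((Uu ^ (1:ℤ) : PSˣ) : PS) := by
          rw [zpow_one, Uu_val]
      _ = ((Uu ^ (-((t+2:ℕ):ℤ) + 1) : PSˣ) : PS) := val_zpow_mul _ _ _
      _ = c := by rw [show (-((t+2:ℕ):ℤ) + 1) = -((t+1:ℕ):ℤ) by push_cast; ring, hc]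
  have hDc : d⁄dX ℚ c = (-((t+1:ℕ):ℤ)) • (a * d⁄dX ℚ u) := by
    rw [hc, derivative_unit_zpow, Uu_val,
      show (-((t+1:ℕ):ℤ) - 1) = -((t+2:ℕ):ℤ) by push_cast; ring, ← ha]
  have e1 : coeff (t+1) (a * Ex) = coeff (t+1) c + coeff t (a * d⁄dX ℚ u) := by
    have hx : a * (u + PowerSeries.X * d⁄dX ℚ u) = a * u + PowerSeries.X * (a * d⁄dX ℚ u) := by
      ring
    rw [hEx, hx, map_add, hau, coeff_succ_X_mul]
  have e2 : coeff t (d⁄dX ℚ c) = ((-((t+1:ℕ):ℤ)) : ℚ) * coeff t (a * d⁄dX ℚ u) := by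
    rw [hDc, map_zsmul, zsmul_eq_mul]
    push_cast
    ring
  have e3 : coeff t (d⁄dX ℚ c) = coeff (t+1) c * ((t:ℚ)+1) := coeff_derivative c t
  have key : (-((t:ℚ)+1)) * coeff t (a * d⁄dX ℚ u) = coeff (t+1) c * ((t:ℚ)+1) := by
    rw [show (-((t:ℚ)+1)) = ((-((t+1:ℕ):ℤ)) : ℚ) by push_cast; ring, ← e2, e3]
  have ht : ((t:ℚ)+1) ≠ 0 := by positivity
  have e4 : coeff t (a * d⁄dX ℚ u) = - coeff (t+1) c := by
    apply mul_left_cancel₀ ht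
    linear_combination -key
  rw [e1, e4]
  ring

/-- The key residue values: `res ((E-1)^r * E)`. -/
lemma res_EL (r : ℤ) : res ((EL - 1) ^ r * EL) = if r = -1 then 1 else 0 := by
  rcases le_or_gt 0 r with hr | hr
  · rw [if_neg (by omega)]
    obtain ⟨n, rfl⟩ := Int.eq_ofNat_of_zero_le hr
    rw [zpow_natCast, EL_sub_one, EL_eq, ← map_pow, ← map_mul]
    exact res_oc _
  · -- r < 0
    obtain ⟨s, rfl, hs⟩ : ∃ s : ℕ, r = -(s:ℤ) ∧ 1 ≤ s := by
      refine ⟨(-r).toNat, by omega, by omega⟩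
    have hb : (oc u) ^ ((s:ℕ):ℤ) * (oc u) ^ (-(s:ℤ)) = 1 := by
      rw [zpow_combine ocu_ne_zero]
      simp
    have hfact : (EL - 1) ^ (-(s:ℤ)) * EL = sz (-(s:ℤ)) * oc (((Uu ^ (-(s:ℤ)) : PSˣ) : PS) * Ex) := by
      rw [map_mul, oc_unit_zpow, Uu_val, ← EL_eq]
      calc (EL - 1) ^ (-(s:ℤ)) * EL
          = (EL - 1) ^ (-(s:ℤ)) * ((oc u) ^ ((s:ℕ):ℤ) * (oc u) ^ (-(s:ℤ))) * EL := by
            rw [hb, mul_one]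
        _ = ((EL - 1) ^ (-(s:ℤ)) * (oc u) ^ ((s:ℕ):ℤ)) * ((oc u) ^ (-(s:ℤ)) * EL) := by
            ring
        _ = sz (-(s:ℤ)) * ((oc u) ^ (-(s:ℤ)) * EL) := by
            rw [sz_eq_factor, neg_neg]
    have hres : res ((EL - 1) ^ (-(s:ℤ)) * EL)
        = coeff (s - 1) (((Uu ^ (-(s:ℤ)) : PSˣ) : PS) * Ex) := by
      rw [hfact, res_sz_mul]
      rw [show (-1 - -(s:ℤ)) = (((s - 1 : ℕ) : ℕ) : ℤ) by push_cast; omega]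
      rw [oc_coeff_nat]
    rw [hres]
    rcases eq_or_lt_of_le hs with h1 | h2
    · -- s = 1
      rw [if_pos (by omega)]
      have hs1 : s = 1 := h1.symm
      subst hs1
      rw [show (1:ℕ) - 1 = 0 from rfl, coeff_zero_eq_constantCoeff, map_mul,
        constantCoeff_unit_zpow Uu (by rw [Uu_val]; exact constantCoeff_u), constantCoeff_Ex,
        one_mul]
    · -- s ≥ 2
      rw [if_neg (by omega)]
      obtain ⟨t, rfl⟩ : ∃ t : ℕ, s = t + 2 := ⟨s - 2, by omega⟩
      rw [show (t + 2) - 1 = t + 1 from rfl]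
      exact coeff_a_Ex t

lemma decomp (g : PS) : g = PowerSeries.C (constantCoeff g)
    + PowerSeries.X * PowerSeries.mk (fun n => coeff (n+1) g) := by
  ext n
  cases n with
  | zero =>
      simp [coeff_zero_eq_constantCoeff, map_add]
  | succ m =>
      rw [map_add, coeff_succ_X_mul, coeff_mk, coeff_C, if_neg (Nat.succ_ne_zero m), zero_add]

lemma sub_C (r : ℚ) : sub (PowerSeries.C r) = PowerSeries.C r := by
  ext n
  rw [coeff_sub, Finset.sum_eq_single 0]
  · rw [pow_zero]
    simp [PowerSeries.coeff_one, PowerSeries.coeff_C, mul_ite]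
  · intro d _ hd
    rw [coeff_C, if_neg hd, zero_mul]
  · intro h
    simp at h

lemma core_nat : ∀ (k : ℕ) (g : PS),
    res (sz (-(k:ℤ)) * oc g) = res ((EL - 1) ^ (-(k:ℤ)) * oc (sub g) * EL) := by
  intro k
  induction k with
  | zero =>
      intro g
      simp only [Nat.cast_zero, neg_zero, zpow_zero, one_mul]
      rw [sz_zero, one_mul, res_oc, EL_eq, ← map_mul, res_oc]
  | succ m ih =>
      intro g
      have hg := decomp g
      set g0 := constantCoeff g with hg0
      set h := PowerSeries.mk (fun n => coeff (n+1) g) with hh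
      -- left side
      have hL : res (sz (-((m+1:ℕ):ℤ)) * oc g)
          = (if m = 0 then g0 else 0) + res (sz (-(m:ℤ)) * oc h) := by
        rw [hg, map_add, mul_add, res_add]
        congr 1
        · rw [res_sz_mul]
          rw [show (-1 - -((m+1:ℕ):ℤ)) = ((m:ℕ):ℤ) by push_cast; ring]
          rw [oc_coeff_nat, coeff_C]
        · rw [map_mul, oc_X, ← mul_assoc, sz_mul,
            show (-((m+1:ℕ):ℤ) + 1) = -(m:ℤ) by push_cast; ring]
      -- right side
      have hsub : sub g = PowerSeries.C g0 + Pex * sub h := by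
        conv_lhs => rw [hg]
        rw [sub_add, sub_C, sub_mul, sub_X]
      have hR : res ((EL - 1) ^ (-((m+1:ℕ):ℤ)) * oc (sub g) * EL)
          = (if m = 0 then g0 else 0) + res ((EL - 1) ^ (-(m:ℤ)) * oc (sub h) * EL) := by
        rw [hsub, map_add, mul_add, add_mul, res_add]
        congr 1
        · -- scalar term
          have hC : oc (PowerSeries.C g0) = HahnSeries.single (0:ℤ) g0 := by
            rw [show oc (PowerSeries.C g0) = HahnSeries.ofPowerSeries ℤ ℚ (PowerSeries.C g0)
              from rfl, HahnSeries.ofPowerSeries_C]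
            rfl
          have hcomm : (EL - 1) ^ (-((m+1:ℕ):ℤ)) * HahnSeries.single (0:ℤ) g0 * EL
              = ((EL - 1) ^ (-((m+1:ℕ):ℤ)) * EL) * HahnSeries.single (0:ℤ) g0 := by ring
          rw [hC, hcomm]
          have hres0 : res (((EL - 1) ^ (-((m+1:ℕ):ℤ)) * EL) * HahnSeries.single (0:ℤ) g0)
              = res ((EL - 1) ^ (-((m+1:ℕ):ℤ)) * EL) * g0 := by
            exact HahnSeries.coeff_mul_single_zero
          rw [hres0, res_EL]
          by_cases hm : m = 0
          · subst hm; norm_num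
          · rw [if_neg (by omega : ¬ (-((m+1:ℕ):ℤ)) = -1), if_neg hm, zero_mul]
        · rw [map_mul, ← EL_sub_one]
          congr 1
          calc (EL - 1) ^ (-((m+1:ℕ):ℤ)) * ((EL - 1) * oc (sub h)) * EL
              = ((EL - 1) ^ (-((m+1:ℕ):ℤ)) * (EL - 1) ^ (1:ℤ)) * oc (sub h) * EL := by
                rw [zpow_one]; ring
            _ = (EL - 1) ^ (-(m:ℤ)) * oc (sub h) * EL := by
                rw [zpow_combine EL_sub_one_ne_zero,
                  show (-((m+1:ℕ):ℤ) + 1) = -(m:ℤ) by push_cast; ring]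
      rw [hL, hR, ih h]


lemma oc_X_pow (k : ℕ) : oc (PowerSeries.X ^ k) = sz k := by
  rw [map_pow, oc_X, szpow_nat]

lemma core (m : ℤ) (g : PS) :
    res (sz m * oc g) = res ((EL - 1) ^ m * oc (sub g) * EL) := by
  rcases le_or_gt 0 m with hm | hm
  · obtain ⟨k, rfl⟩ := Int.eq_ofNat_of_zero_le hm
    rw [← oc_X_pow, ← map_mul, res_oc, zpow_natCast, EL_sub_one, ← map_pow, EL_eq, ← map_mul,
      ← map_mul, res_oc]
  · obtain ⟨k, rfl⟩ : ∃ k : ℕ, m = -(k:ℤ) := ⟨(-m).toNat, by omega⟩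
    exact core_nat k g

-- ring hom packaging of sub
lemma sub_zero' : sub 0 = 0 := by
  ext n
  rw [coeff_sub]
  simp

def subHom : PS →+* PS where
  toFun := sub
  map_one' := sub_one
  map_mul' := sub_mul
  map_zero' := sub_zero'
  map_add' := sub_add

lemma sub_w_eq : sub w = ((Uu⁻¹ : PSˣ) : PS) := by
  have h1 : (Uu : PS) * sub w = 1 := by rw [Uu_val]; exact u_mul_sub_w
  calc sub w = ((Uu⁻¹ : PSˣ) : PS) * ((Uu : PS) * sub w) := by
        rw [← mul_assoc, Units.inv_mul, one_mul]
    _ = ((Uu⁻¹ : PSˣ) : PS) := by rw [h1, mul_one]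

lemma Vu_inv_val : ((Vu⁻¹ : PSˣ) : PS) = vinv := by
  have h : (Vu : PS) * vinv = 1 := by rw [Vu_val]; exact onePlusX_mul_vinv
  calc ((Vu⁻¹ : PSˣ) : PS) = ((Vu⁻¹ : PSˣ) : PS) * ((Vu : PS) * vinv) := by rw [h, mul_one]
    _ = vinv := by rw [← mul_assoc, Units.inv_mul, one_mul]

lemma sub_Wzpow (k : ℤ) : sub ((Wu ^ k : PSˣ) : PS) = ((Uu ^ (-k) : PSˣ) : PS) := by
  have hmap : Units.map (subHom.toMonoidHom) Wu = Uu⁻¹ := by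
    apply Units.ext
    simp only [Units.coe_map, RingHom.toMonoidHom_eq_coe, MonoidHom.coe_coe]
    rw [Wu_val]
    exact sub_w_eq
  have h1 : sub ((Wu ^ k : PSˣ) : PS) = ((Units.map (subHom.toMonoidHom) (Wu ^ k) : PSˣ) : PS) := rfl
  rw [h1, map_zpow, hmap, inv_zpow, ← zpow_neg]

lemma E_eq_EL : E = EL := rfl

/-- Fact 1: `q^{(1,c+i)}_{-c} = [x^i] (log(1+x)/x)^(c-1)` -/
lemma fact1 (c : ℤ) (i : ℕ) : q (c + i) (-c) = coeff i ((Wu ^ (c - 1) : PSˣ) : PS) := by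
  have hq : q (c + i) (-c) = res (sz (c - 1) * (EL * (EL - 1) ^ (-(c + (i:ℤ))))) := by
    rw [res_sz_mul, show (-1 - (c - 1)) = -c by ring, q, E_eq_EL, ← zpow_neg]
  rw [hq]
  have hrearr : sz (c - 1) * (EL * (EL - 1) ^ (-(c + (i:ℤ))))
      = (EL - 1) ^ (-((i:ℤ) + 1)) * oc (sub ((Wu ^ (c - 1) : PSˣ) : PS)) * EL := by
    have hg : oc (sub ((Wu ^ (c - 1) : PSˣ) : PS)) = (oc u) ^ (1 - c) := by
      rw [sub_Wzpow, oc_unit_zpow, Uu_val, show -(c - 1) = 1 - c by ring]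
    rw [hg, sz_eq_factor]
    calc (EL - 1) ^ (c - 1) * (oc u) ^ (-(c - 1)) * (EL * (EL - 1) ^ (-(c + (i:ℤ))))
        = ((EL - 1) ^ (c - 1) * (EL - 1) ^ (-(c + (i:ℤ)))) * (oc u) ^ (-(c - 1)) * EL := by ring
      _ = (EL - 1) ^ (-((i:ℤ) + 1)) * (oc u) ^ (1 - c) * EL := by
          rw [zpow_combine EL_sub_one_ne_zero, show (c - 1 + -(c + (i:ℤ))) = -((i:ℤ) + 1) by ring,
            show -(c - 1) = 1 - c by ring]
  rw [hrearr, ← core (-((i:ℤ) + 1)) ((Wu ^ (c - 1) : PSˣ) : PS), res_sz_mul,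
    show (-1 - -((i:ℤ) + 1)) = ((i:ℕ):ℤ) by push_cast; ring, oc_coeff_nat]

/-- flexible-argument version -/
lemma fact1x (c : ℤ) (i : ℕ) (a b : ℤ) (ha : a = c + i) (hb : b = -c) :
    q a b = coeff i ((Wu ^ (c - 1) : PSˣ) : PS) := by
  subst ha; subst hb; exact fact1 c i

/-- Fact 1': similar for series without the `e^x` numerator -/
lemma fact1' (c : ℤ) (i : ℕ) :
    ((EL - 1) ^ (-(c + (i:ℤ))) : L).coeff (-c) = coeff i ((Wu ^ (c - 1) * Vu⁻¹ : PSˣ) : PS) := by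
  have hv : oc (sub vinv) * EL = 1 := by
    have h := congrArg oc Ex_mul_sub_vinv
    rw [map_mul, map_one] at h
    rw [mul_comm, ← h]
    rfl
  have hq : ((EL - 1) ^ (-(c + (i:ℤ))) : L).coeff (-c)
      = res (sz (c - 1) * (EL - 1) ^ (-(c + (i:ℤ)))) := by
    rw [res_sz_mul, show (-1 - (c - 1)) = -c by ring]
  rw [hq]
  have hg : oc (sub ((Wu ^ (c - 1) * Vu⁻¹ : PSˣ) : PS)) = (oc u) ^ (1 - c) * oc (sub vinv) := by
    rw [Units.val_mul, sub_mul, map_mul, sub_Wzpow, oc_unit_zpow, Uu_val,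
      show -(c - 1) = 1 - c by ring, Vu_inv_val]
  have hrearr : sz (c - 1) * (EL - 1) ^ (-(c + (i:ℤ)))
      = (EL - 1) ^ (-((i:ℤ) + 1)) * oc (sub ((Wu ^ (c - 1) * Vu⁻¹ : PSˣ) : PS)) * EL := by
    rw [hg, sz_eq_factor]
    calc (EL - 1) ^ (c - 1) * (oc u) ^ (-(c - 1)) * (EL - 1) ^ (-(c + (i:ℤ)))
        = ((EL - 1) ^ (c - 1) * (EL - 1) ^ (-(c + (i:ℤ)))) * (oc u) ^ (-(c - 1))
            * (oc (sub vinv) * EL) := by rw [hv, mul_one]; ring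
      _ = (EL - 1) ^ (-((i:ℤ) + 1)) * ((oc u) ^ (1 - c) * oc (sub vinv)) * EL := by
          rw [zpow_combine EL_sub_one_ne_zero, show (c - 1 + -(c + (i:ℤ))) = -((i:ℤ) + 1) by ring,
            show -(c - 1) = 1 - c by ring]
          ring
  rw [hrearr, ← core (-((i:ℤ) + 1)) ((Wu ^ (c - 1) * Vu⁻¹ : PSˣ) : PS), res_sz_mul,
    show (-1 - -((i:ℤ) + 1)) = ((i:ℕ):ℤ) by push_cast; ring, oc_coeff_nat]

/-- the Bernoulli generating function fact -/
lemma q_one_eq (j : ℕ) : q 1 ((j:ℤ) - 1) = bernoulli' j / (j.factorial : ℚ) := by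
  have hrel := bernoulli'PowerSeries_mul_exp_sub_one ℚ
  have hL : oc (bernoulli'PowerSeries ℚ) * (EL - 1) = sz 1 * EL := by
    have h := congrArg oc hrel
    rw [map_mul, map_mul] at h
    rw [show oc (PowerSeries.exp ℚ - 1) = EL - 1 from by rw [EL_sub_one]; rfl] at h
    rw [show oc PowerSeries.X = sz 1 from HahnSeries.ofPowerSeries_X] at h
    rw [show oc (PowerSeries.exp ℚ) = EL from rfl] at h
    exact h
  have hEdiv : E * ((E - 1) ^ (1:ℤ))⁻¹ = sz (-1) * oc (bernoulli'PowerSeries ℚ) := by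
    rw [zpow_one, E_eq_EL]
    have h2 : EL = sz (-1) * oc (bernoulli'PowerSeries ℚ) * (EL - 1) := by
      rw [mul_assoc, hL, ← mul_assoc, sz_mul, show (-1 + 1 : ℤ) = 0 by ring, sz_zero, one_mul]
    nth_rewrite 1 [h2]
    rw [mul_assoc, mul_inv_cancel₀ EL_sub_one_ne_zero, mul_one]
  rw [q, hEdiv, coeff_sz_mul, show ((j:ℤ) - 1 - -1) = ((j:ℕ):ℤ) by push_cast; ring, oc_coeff_nat]
  rw [bernoulli'PowerSeries, coeff_mk]
  simp [Algebra.algebraMap_self]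

lemma coeff_X_mul_derivative (Fp : PS) (i : ℕ) :
    coeff i (PowerSeries.X * d⁄dX ℚ Fp) = i * coeff i Fp := by
  cases i with
  | zero =>
      rw [coeff_zero_eq_constantCoeff, map_mul, constantCoeff_X, zero_mul]
      simp
  | succ m => rw [coeff_succ_X_mul, coeff_derivative]; push_cast; ring

end Stmt19Aux

end

open Stmt19Aux

/-- The recursion for Bernoulli-type numbers: for every `n : ℤ` and `j > 0`,
`q^{(1,n)}_{-n+j} = -(1/j)[(B_j/j!)(n-j-1) + ∑_{i=1}^{j-1} i q^{(1,n+i-j)}_{-n+j} q^{(1,-n-i+j+2)}_{n-2}]`,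
where `B_j = bernoulli' j` is the `j`-th Bernoulli number with the convention `B_1 = 1/2`. -/
theorem stmt19 (n : ℤ) (j : ℕ) (hj : 0 < j) :
    q n (-n + j) =
      -(1 / (j : ℚ)) *
        ((bernoulli' j / (Nat.factorial j : ℚ)) * ((n : ℚ) - (j : ℚ) - 1) +
          ∑ i ∈ Finset.Icc 1 (j - 1),
            (i : ℚ) * q (n + (i : ℤ) - (j : ℤ)) (-n + j) * q (-n - (i : ℤ) + (j : ℤ) + 2) (n - 2)) := by
  have hj0 : (j:ℚ) ≠ 0 := Nat.cast_ne_zero.mpr (by omega)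
  set c : ℤ := n - j with hc
  set F : PS := ((Wu ^ (c - 1) : PSˣ) : PS) with hF
  set G : PS := ((Wu ^ (1 - n) : PSˣ) : PS) with hG
  -- LHS
  have hA : q n (-n + (j:ℤ)) = coeff j F :=
    fact1x c j n (-n + (j:ℤ)) (by rw [hc]; push_cast; ring) (by rw [hc]; ring)
  -- sum terms
  have hB : ∀ i ∈ Finset.Icc 1 (j-1),
      (i:ℚ) * q (n + (i:ℤ) - (j:ℤ)) (-n + (j:ℤ)) * q (-n - (i:ℤ) + (j:ℤ) + 2) (n - 2)
        = (i:ℚ) * coeff i F * coeff (j - i) G := by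
    intro i hi
    rw [Finset.mem_Icc] at hi
    have hij : i ≤ j := by omega
    rw [fact1x c i (n + (i:ℤ) - (j:ℤ)) (-n + (j:ℤ)) (by rw [hc]; push_cast; ring)
      (by rw [hc]; ring)]
    have h2 := fact1x (2 - n) (j - i) (-n - (i:ℤ) + (j:ℤ) + 2) (n - 2)
      (by push_cast [Nat.cast_sub hij]; ring) (by ring)
    rw [show (2 - n - 1 : ℤ) = 1 - n by ring] at h2
    rw [h2, ← hG]
  -- convolution
  have hconv : coeff j ((PowerSeries.X * d⁄dX ℚ F) * G)
      = ∑ i ∈ Finset.range (j+1), (i:ℚ) * coeff i F * coeff (j - i) G := by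
    rw [PowerSeries.coeff_mul, Finset.Nat.sum_antidiagonal_eq_sum_range_succ_mk]
    apply Finset.sum_congr rfl
    intro i _
    rw [coeff_X_mul_derivative]
  -- sum split
  have hG0 : coeff 0 G = 1 := by
    rw [coeff_zero_eq_constantCoeff, hG]
    exact constantCoeff_unit_zpow Wu (by rw [Wu_val]; exact constantCoeff_w) _
  have hIcc : Finset.Icc 1 (j-1) = Finset.Ico 1 j := by
    rw [← Finset.Ico_add_one_right_eq_Icc]
    congr 1
    omega
  have hsplit : ∑ i ∈ Finset.range (j+1), (i:ℚ) * coeff i F * coeff (j - i) G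
      = (∑ i ∈ Finset.Icc 1 (j-1), (i:ℚ) * coeff i F * coeff (j - i) G)
        + (j:ℚ) * coeff j F := by
    rw [Finset.sum_range_succ, hIcc]
    rw [Finset.range_eq_Ico, Finset.sum_eq_sum_Ico_succ_bot (by omega : 0 < j)]
    rw [show ((0:ℕ):ℚ) * coeff 0 F * coeff (j - 0) G = 0 by push_cast; ring, zero_add]
    rw [Nat.sub_self, hG0, mul_one]
  -- compute the product series
  have hprod : PowerSeries.X * d⁄dX ℚ F * G
      = (c - 1) • (vinv * ((Wu ^ (-(j:ℤ) - 1) : PSˣ) : PS) - ((Wu ^ (-(j:ℤ)) : PSˣ) : PS)) := by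
    rw [hF, derivative_unit_zpow Wu (c-1), Wu_val, mul_smul_comm, smul_mul_assoc]
    congr 1
    calc PowerSeries.X * (((Wu ^ (c - 1 - 1) : PSˣ) : PS) * d⁄dX ℚ w) * G
        = (PowerSeries.X * d⁄dX ℚ w) * (((Wu ^ (c - 1 - 1) : PSˣ) : PS) * G) := by ring
      _ = (vinv - w) * ((Wu ^ (-(j:ℤ) - 1) : PSˣ) : PS) := by
          rw [X_mul_derivative_w, hG, val_zpow_mul,
            show (c - 1 - 1 + (1 - n)) = -(j:ℤ) - 1 by rw [hc]; ring]
      _ = vinv * ((Wu ^ (-(j:ℤ) - 1) : PSˣ) : PS) - ((Wu ^ (-(j:ℤ)) : PSˣ) : PS) := by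
          rw [_root_.sub_mul]
          congr 1
          rw [show w = ((Wu ^ (1:ℤ) : PSˣ) : PS) by rw [zpow_one, Wu_val], val_zpow_mul,
            show ((1:ℤ) + (-(j:ℤ) - 1)) = -(j:ℤ) by ring]
  -- the two special coefficients
  have hzero : coeff j (vinv * ((Wu ^ (-(j:ℤ) - 1) : PSˣ) : PS)) = 0 := by
    have h := fact1' (-(j:ℤ)) j
    rw [show (-(-(j:ℤ) + (j:ℕ))) = 0 by push_cast; ring, zpow_zero] at h
    rw [show ((1:L)).coeff (-(-(j:ℤ))) = 0 by
      rw [neg_neg, HahnSeries.coeff_one, if_neg (show ¬ ((j:ℤ) = 0) by omega)]] at h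
    rw [Units.val_mul, Vu_inv_val, mul_comm] at h
    exact h.symm
  have hbern : coeff j ((Wu ^ (-(j:ℤ)) : PSˣ) : PS) = bernoulli' j / (j.factorial : ℚ) := by
    have h := fact1x (1 - (j:ℤ)) j 1 ((j:ℤ) - 1) (by push_cast; ring) (by ring)
    rw [show (1 - (j:ℤ) - 1) = -(j:ℤ) by ring] at h
    rw [← h, q_one_eq]
  -- main identity
  have hmain : (∑ i ∈ Finset.Icc 1 (j-1), (i:ℚ) * coeff i F * coeff (j - i) G)
      + (j:ℚ) * coeff j F
      = (((c:ℤ):ℚ) - 1) * (0 - bernoulli' j / (j.factorial : ℚ)) := by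
    rw [← hsplit, ← hconv, hprod, map_zsmul, map_sub, hzero, hbern, zsmul_eq_mul]
    push_cast
    ring
  -- finish
  rw [hA, Finset.sum_congr rfl hB]
  have hcq : ((c:ℤ):ℚ) = (n:ℚ) - (j:ℚ) := by rw [hc]; push_cast; ring
  rw [hcq] at hmain
  have h1 : coeff j F = (1/(j:ℚ)) * ((j:ℚ) * coeff j F) := by
    field_simp
  rw [h1, show (j:ℚ) * coeff j F = ((n:ℚ) - (j:ℚ) - 1) * (0 - bernoulli' j / (j.factorial:ℚ))
      - ∑ i ∈ Finset.Icc 1 (j-1), (i:ℚ) * coeff i F * coeff (j - i) G by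
    linear_combination hmain]
  ring
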